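/- Let A be a Schur ring over a finite abelian group G = G₁ × G₂ with G₁, G₂ both A-subgroups, and suppose A restricted to G₁ equals the full group ring ℤG₁. Then A = A_{G₁} ⊗ A_{G₂}, i.e., every basic set of A is of the form X₁ × X₂ with X₁ ∈ S(A_{G₁}) and X₂ ∈ S(A_{G₂}). -/

import Mathlib

open scoped BigOperators

/-- The indicator element `X̲ = Σ_{x∈X} x` of a finset in the integral group ring `ℤG`. -/
noncomputable def grpInd {G : Type*} [Group G] (X : Finset G) : MonoidAlgebra ℤ G :=
  ∑ x ∈ X, MonoidAlgebra.single x (1 : ℤ)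

/-- A Schur ring over a finite group `G`: a partition of `G` containing `{1}`,
closed under inverses, whose indicator elements span a subring of `ℤG`. -/
structure SchurRing (G : Type*) [Group G] [Fintype G] [DecidableEq G] where
  parts : Finset (Finset G)
  nonempty_mem : ∀ X ∈ parts, X.Nonempty
  cover : ∀ g : G, ∃ X ∈ parts, g ∈ X
  pairwise_disjoint : ∀ X ∈ parts, ∀ Y ∈ parts, X ≠ Y → Disjoint X Y
  one_mem : ({1} : Finset G) ∈ parts
  inv_mem : ∀ X ∈ parts, X.image (·⁻¹) ∈ parts
  mul_mem : ∀ X ∈ parts, ∀ Y ∈ parts, ∃ c : Finset G → ℤ,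
    grpInd X * grpInd Y = ∑ Z ∈ parts, c Z • grpInd Z

namespace SchurRing

variable {G : Type*} [Group G] [Fintype G] [DecidableEq G]

/-- The underlying `ℤ`-module of the Schur ring: the span of the indicators of basic sets. -/
noncomputable def carrier (A : SchurRing G) : Submodule ℤ (MonoidAlgebra ℤ G) :=
  Submodule.span ℤ {v | ∃ X ∈ A.parts, v = grpInd X}

/-- `X ⊆ G` is an `A`-set if its indicator lies in `A`. -/
def IsASet (A : SchurRing G) (X : Finset G) : Prop := grpInd X ∈ A.carrier

/-- `A` is a subring of `B` (as S-rings over the same group). -/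
def le (A B : SchurRing G) : Prop := ∀ X ∈ A.parts, grpInd X ∈ B.carrier

end SchurRing

/-- An algebraic isomorphism of Schur rings: a bijection of basic sets preserving all
structure constants (the structure constant `c^Z_{X,Y}` is the coefficient of the
product `X̲·Y̲` at any `z ∈ Z`). -/
def IsAlgIso {G G' : Type*} [Group G] [Fintype G] [DecidableEq G]
    [Group G'] [Fintype G'] [DecidableEq G']
    (A : SchurRing G) (A' : SchurRing G') (φ : Finset G → Finset G') : Prop :=
  Set.BijOn φ ↑A.parts ↑A'.parts ∧
  ∀ X ∈ A.parts, ∀ Y ∈ A.parts, ∀ Z ∈ A.parts, ∀ z ∈ Z, ∀ z' ∈ φ Z,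
    (grpInd X * grpInd Y).coeff z = (grpInd (φ X) * grpInd (φ Y)).coeff z'

/-- A combinatorial isomorphism of Schur rings: a bijection `G → G'` mapping basic sets to
basic sets and inducing a Cayley graph isomorphism on each basic set. -/
def IsCombIso {G G' : Type*} [Group G] [Fintype G] [DecidableEq G]
    [Group G'] [Fintype G'] [DecidableEq G']
    (A : SchurRing G) (A' : SchurRing G') (f : G → G') : Prop :=
  Function.Bijective f ∧
  ∀ X ∈ A.parts, X.image f ∈ A'.parts ∧
    ∀ g h : G, h * g⁻¹ ∈ X ↔ f h * (f g)⁻¹ ∈ X.image f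

/-- An automorphism of a Schur ring: a permutation of `G` preserving the edge set of
`Cay(G,X)` for every basic set `X`. -/
def IsSchurAut {G : Type*} [Group G] [Fintype G] [DecidableEq G]
    (A : SchurRing G) (f : G → G) : Prop :=
  Function.Bijective f ∧ ∀ X ∈ A.parts, ∀ g h : G, h * g⁻¹ ∈ X ↔ f h * (f g)⁻¹ ∈ X

/-- Separability with respect to the class of (finite) abelian groups. -/
def SchurRing.IsSeparableAbelian {G : Type} [Group G] [Fintype G] [DecidableEq G]
    (A : SchurRing G) : Prop :=
  ∀ (G' : Type) [CommGroup G'] [Fintype G'] [DecidableEq G'],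
    ∀ (A' : SchurRing G') (φ : Finset G → Finset G'),
    IsAlgIso A A' φ →
    ∃ f : G → G', IsCombIso A A' f ∧ ∀ X ∈ A.parts, φ X = X.image f

lemma grpInd_apply' {G : Type*} [Group G] [DecidableEq G] (X : Finset G) (g : G) :
    (grpInd X).coeff g = if g ∈ X then 1 else 0 := by
  classical
  rw [grpInd, MonoidAlgebra.coeff_sum, Finsupp.finset_sum_apply]
  simp [MonoidAlgebra.coeff_single, Finsupp.single_apply]

namespace SchurRing

variable {G : Type*} [Group G] [Fintype G] [DecidableEq G]

/-- Elements of the carrier have coefficients constant on basic sets. -/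
lemma carrier_apply_const (A : SchurRing G) {v : MonoidAlgebra ℤ G}
    (hv : v ∈ A.carrier) {Z : Finset G} (hZ : Z ∈ A.parts) {g h : G}
    (hg : g ∈ Z) (hh : h ∈ Z) : v.coeff g = v.coeff h := by
  induction hv using Submodule.span_induction with
  | mem x hx =>
    obtain ⟨X, hX, rfl⟩ := hx
    rw [grpInd_apply', grpInd_apply']
    have key : g ∈ X ↔ h ∈ X := by
      constructor
      · intro hgX
        have hXZ : X = Z := by
          by_contra hne
          exact absurd hg (Finset.disjoint_left.mp
            (A.pairwise_disjoint X hX Z hZ hne) hgX)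
        exact hXZ ▸ hh
      · intro hhX
        have hXZ : X = Z := by
          by_contra hne
          exact absurd hh (Finset.disjoint_left.mp
            (A.pairwise_disjoint X hX Z hZ hne) hhX)
        exact hXZ ▸ hg
    rw [if_congr key rfl rfl]
  | zero => simp
  | add x y _ _ hx hy => rw [MonoidAlgebra.coeff_add, Finsupp.add_apply, Finsupp.add_apply, hx, hy]
  | smul c x _ hx => rw [MonoidAlgebra.coeff_smul_apply, MonoidAlgebra.coeff_smul_apply, hx]

/-- A basic set meeting an `A`-set is contained in it. -/
lemma part_subset_of_isASet (A : SchurRing G) {W : Finset G} (hW : A.IsASet W)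
    {Z : Finset G} (hZ : Z ∈ A.parts) {g : G} (hgZ : g ∈ Z) (hgW : g ∈ W) :
    Z ⊆ W := by
  intro h hh
  have hc := A.carrier_apply_const hW hZ hgZ hh
  rw [grpInd_apply', grpInd_apply'] at hc
  by_contra hW'
  simp [hgW, hW'] at hc

lemma isASet_image_mul (A : SchurRing G) {s : G}
    (hs : ({s} : Finset G) ∈ A.parts) {X : Finset G} (hX : X ∈ A.parts) :
    A.IsASet (X.image (s * ·)) := by
  obtain ⟨c, hc⟩ := A.mul_mem _ hs _ hX
  have heq : grpInd (X.image (s * ·)) = grpInd ({s} : Finset G) * grpInd X := by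
    rw [grpInd, grpInd, grpInd, Finset.sum_singleton, Finset.mul_sum,
      Finset.sum_image (fun a _ b _ h => mul_left_cancel h)]
    simp [MonoidAlgebra.single_mul_single]
  rw [SchurRing.IsASet, heq, hc]
  exact Submodule.sum_mem _ fun Z hZ =>
    Submodule.smul_mem _ _ (Submodule.subset_span ⟨Z, hZ, rfl⟩)

omit [Fintype G] in
lemma image_mul_cancel {s : G} (Z : Finset G) :
    (Z.image (s⁻¹ * ·)).image (s * ·) = Z := by
  rw [Finset.image_image]
  have : ((s * ·) ∘ (s⁻¹ * ·)) = id := by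
    funext y; simp
  rw [this, Finset.image_id]

/-- Translates of basic sets by singleton basic sets are basic sets. -/
lemma image_mul_mem (A : SchurRing G) {s : G}
    (hs : ({s} : Finset G) ∈ A.parts) (hs' : ({s⁻¹} : Finset G) ∈ A.parts)
    {X : Finset G} (hX : X ∈ A.parts) :
    X.image (s * ·) ∈ A.parts := by
  have hWset := A.isASet_image_mul hs hX
  obtain ⟨x, hx⟩ := A.nonempty_mem X hX
  have hsx : s * x ∈ X.image (s * ·) := Finset.mem_image_of_mem _ hx
  obtain ⟨Z, hZ, hsxZ⟩ := A.cover (s * x)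
  have hZW : Z ⊆ X.image (s * ·) := A.part_subset_of_isASet hWset hZ hsxZ hsx
  have hZ'set := A.isASet_image_mul hs' hZ
  have hxZ' : x ∈ Z.image (s⁻¹ * ·) := by
    have : x = s⁻¹ * (s * x) := by simp
    rw [this]; exact Finset.mem_image_of_mem _ hsxZ
  have hXZ' : X ⊆ Z.image (s⁻¹ * ·) := A.part_subset_of_isASet hZ'set hX hx hxZ'
  have hZ'X : Z.image (s⁻¹ * ·) ⊆ X := by
    intro y hy
    obtain ⟨z, hz, rfl⟩ := Finset.mem_image.mp hy
    obtain ⟨x', hx', hx'e⟩ := Finset.mem_image.mp (hZW hz)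
    rw [← hx'e]; simpa using hx'
  have : X = Z.image (s⁻¹ * ·) := le_antisymm hXZ' hZ'X
  rw [this, image_mul_cancel]
  exact hZ

end SchurRing

/-- if `G = G₁ × G₂` with `G₁`, `G₂` both `A`-subgroups and `A_{G₁} = ℤG₁`
(every element of `G₁` is a singleton basic set), then `A = A_{G₁} ⊗ A_{G₂}`:
every basic set is a product `X₁ × X₂` of basic sets of the induced S-rings. -/
theorem stmt10 {G₁ G₂ : Type*} [CommGroup G₁] [CommGroup G₂]
    [Fintype G₁] [Fintype G₂] [DecidableEq G₁] [DecidableEq G₂]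
    (A : SchurRing (G₁ × G₂))
    (h₁ : A.IsASet (Finset.univ.image (fun g : G₁ => (g, (1 : G₂)))))
    (h₂ : A.IsASet (Finset.univ.image (fun g : G₂ => ((1 : G₁), g))))
    (hZ : ∀ g : G₁, ({(g, (1 : G₂))} : Finset (G₁ × G₂)) ∈ A.parts) :
    ∀ X ∈ A.parts, ∃ X₁ : Finset G₁, ∃ X₂ : Finset G₂,
      X = X₁ ×ˢ X₂ ∧
      X₁.image (fun g : G₁ => (g, (1 : G₂))) ∈ A.parts ∧
      X₂.image (fun g : G₂ => ((1 : G₁), g)) ∈ A.parts := by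

  classical
  intro X hX
  obtain ⟨⟨a, b⟩, hab⟩ := A.nonempty_mem X hX
  have hsinv : ({((a⁻¹, (1 : G₂)) : G₁ × G₂)⁻¹} : Finset (G₁ × G₂)) ∈ A.parts := by
    simpa using hZ a
  have hW : X.image (((a⁻¹, (1 : G₂)) : G₁ × G₂) * ·) ∈ A.parts :=
    A.image_mul_mem (hZ a⁻¹) hsinv hX
  set W := X.image (((a⁻¹, (1 : G₂)) : G₁ × G₂) * ·) with hWdef
  have h1b : ((1 : G₁), b) ∈ W := by
    have he : ((1 : G₁), b) = ((a⁻¹, (1 : G₂)) : G₁ × G₂) * (a, b) := by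
      simp [Prod.ext_iff]
    rw [he]
    exact Finset.mem_image_of_mem _ hab
  have hWsub : W ⊆ Finset.univ.image (fun g : G₂ => ((1 : G₁), g)) :=
    A.part_subset_of_isASet h₂ hW h1b
      (Finset.mem_image.mpr ⟨b, Finset.mem_univ b, rfl⟩)
  have hfst : ∀ w ∈ W, w.1 = (1 : G₁) := by
    intro w hw
    obtain ⟨g, -, hg⟩ := Finset.mem_image.mp (hWsub hw)
    rw [← hg]
  have himg : (W.image Prod.snd).image (fun g : G₂ => ((1 : G₁), g)) = W := by
    ext p
    constructor
    · intro hp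
      obtain ⟨q, hq, hqp⟩ := Finset.mem_image.mp hp
      obtain ⟨w, hw, hwq⟩ := Finset.mem_image.mp hq
      have hw1 : w = ((1 : G₁), q) := by
        rw [Prod.ext_iff]
        exact ⟨hfst w hw, hwq⟩
      rw [← hqp, ← hw1]
      exact hw
    · intro hp
      refine Finset.mem_image.mpr ⟨p.2, Finset.mem_image_of_mem _ hp, ?_⟩
      rw [Prod.ext_iff]
      exact ⟨(hfst p hp).symm, rfl⟩
  refine ⟨{a}, W.image Prod.snd, ?_, ?_, ?_⟩
  · ext ⟨p, q⟩
    simp only [Finset.mem_product, Finset.mem_singleton]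
    constructor
    · intro hpq
      have hmem : ((a⁻¹ * p, q) : G₁ × G₂) ∈ W := by
        have he : ((a⁻¹ * p, q) : G₁ × G₂) = ((a⁻¹, (1 : G₂)) : G₁ × G₂) * (p, q) := by
          simp [Prod.ext_iff]
        rw [he]
        exact Finset.mem_image_of_mem _ hpq
      have hp1 : a⁻¹ * p = 1 := hfst _ hmem
      have hpa : p = a := (inv_mul_eq_one.mp hp1).symm
      exact ⟨hpa, Finset.mem_image.mpr ⟨_, hmem, rfl⟩⟩
    · rintro ⟨rfl, hq⟩
      obtain ⟨w, hw, hwq⟩ := Finset.mem_image.mp hq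
      obtain ⟨x, hx, hxw⟩ := Finset.mem_image.mp hw
      have hxval : x = (p, q) := by
        have h1 : x = ((p, (1 : G₂)) : G₁ × G₂) * w := by
          rw [← hxw]
          rw [Prod.ext_iff]
          simp
        rw [h1, Prod.ext_iff]
        constructor
        · simp [hfst w hw]
        · simp [hwq]
      rw [← hxval]
      exact hx
  · simpa using hZ a
  · rw [himg]
    exact hW
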